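/- arXiv:1311.5636 — 4 statements merged into one kernel-verified Lean document; each statement's English description precedes it below -/
import Mathlib

section
/- Let μ be a probability measure on a type X, let φ : X → H be a measurable map into a finite-dimensional real inner product space H, and let y : X → ℝ, with φ·y Bochner integrable. Define κ(x,x') = ⟨φ(x), φ(x')⟩. Then sup_{w : ‖w‖ ≤ 1} ∫ y(x)⟨w, φ(x)⟩ dμ(x) = sqrt( ∬ y(x) y(x') κ(x,x') dμ(x) dμ(x') ). -/
open MeasureTheory
open scoped RealInnerProductSpace

theorem stmt1 {X : Type*} [MeasurableSpace X] (μ : Measure X) [IsProbabilityMeasure μ]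
    {H : Type*} [NormedAddCommGroup H] [InnerProductSpace ℝ H] [FiniteDimensional ℝ H]
    [MeasurableSpace H] [BorelSpace H]
    (φ : X → H) (y : X → ℝ) (hφ : Measurable φ) (hy : Measurable y)
    (hInt : Integrable (fun x => y x • φ x) μ) :
    (⨆ w : {w : H // ‖w‖ ≤ 1}, ∫ x, y x * ⟪(w : H), φ x⟫ ∂μ)
      = Real.sqrt (∫ x, ∫ x', y x * y x' * ⟪φ x, φ x'⟫ ∂μ ∂μ) := by
  set m : H := ∫ x, y x • φ x ∂μ with hm
  have hlin : ∀ w : H, ∫ x, y x * ⟪w, φ x⟫ ∂μ = ⟪w, m⟫ := by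
    intro w
    have : ∀ x, y x * ⟪w, φ x⟫ = ⟪w, y x • φ x⟫ := by
      intro x; rw [real_inner_smul_right]
    simp_rw [this]
    exact integral_inner hInt w
  have hdouble : (∫ x, ∫ x', y x * y x' * ⟪φ x, φ x'⟫ ∂μ ∂μ) = ‖m‖ ^ 2 := by
    have h1 : ∀ x, (∫ x', y x * y x' * ⟪φ x, φ x'⟫ ∂μ) = ⟪y x • φ x, m⟫ := by
      intro x
      have : ∀ x', y x * y x' * ⟪φ x, φ x'⟫ = ⟪y x • φ x, y x' • φ x'⟫ := by
        intro x'
        rw [real_inner_smul_left, real_inner_smul_right]; ring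
      simp_rw [this]
      exact integral_inner hInt _
    simp_rw [h1]
    have : ∀ x, ⟪y x • φ x, m⟫ = ⟪m, y x • φ x⟫ := fun x => real_inner_comm _ _
    simp_rw [this]
    rw [integral_inner hInt m, ← hm, real_inner_self_eq_norm_sq]
  rw [hdouble, Real.sqrt_sq (norm_nonneg m)]
  simp_rw [hlin]
  -- sup over unit ball of ⟪w, m⟫ = ‖m‖
  have hne : Nonempty {w : H // ‖w‖ ≤ 1} := ⟨⟨0, by simp⟩⟩
  apply le_antisymm
  · apply ciSup_le
    intro w
    calc ⟪(w : H), m⟫ ≤ ‖(w : H)‖ * ‖m‖ := real_inner_le_norm _ _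
      _ ≤ 1 * ‖m‖ := by gcongr; exact w.2
      _ = ‖m‖ := one_mul _
  · by_cases hm0 : m = 0
    · simp [hm0]
    · have hnorm : ‖(‖m‖⁻¹ • m)‖ ≤ 1 := by
        rw [norm_smul, norm_inv, norm_norm, inv_mul_cancel₀ (norm_ne_zero_iff.mpr hm0)]
      have hb : BddAbove (Set.range fun w : {w : H // ‖w‖ ≤ 1} => ⟪(w : H), m⟫) := by
        refine ⟨‖m‖, ?_⟩
        rintro r ⟨w, rfl⟩
        calc ⟪(w : H), m⟫ ≤ ‖(w : H)‖ * ‖m‖ := real_inner_le_norm _ _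
          _ ≤ 1 * ‖m‖ := by gcongr; exact w.2
          _ = ‖m‖ := one_mul _
      refine le_ciSup_of_le hb ⟨‖m‖⁻¹ • m, hnorm⟩ ?_
      simp only [real_inner_smul_left, real_inner_self_eq_norm_sq]
      rw [sq]
      field_simp
      exact le_rfl
end

section
/- Let (Ω, μ) be a probability space, y : Ω → ℝ, and let x_S and x_i be random variables with x_i independent of the pair (x_S, y). Let κ_S be a positive semidefinite kernel on the range of x_S (all quantities bounded measurable). Define A_S = E_{ω,ω' iid}[y(ω) y(ω') κ_S(x_S(ω), x_S(ω'))] and A_{S∪{i}} = E[y y' κ_S(x_S, x_S') exp(-γ(x_i - x_i')²)] for γ ≥ 0. Then A_{S∪{i}} ≤ A_S. -/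
open MeasureTheory ProbabilityTheory

lemma intble_of_bdd {α : Type*} [MeasurableSpace α] {μ : Measure α} [IsFiniteMeasure μ]
    {f : α → ℝ} (hf : AEStronglyMeasurable f μ) {C : ℝ} (h : ∀ a, |f a| ≤ C) :
    Integrable f μ :=
  Integrable.mono' (integrable_const C) hf (ae_of_all _ fun a => by simpa using h a)

lemma pi_map_eval {Ω : Type*} [MeasurableSpace Ω] (μ : Measure Ω) [IsProbabilityMeasure μ]
    {m : ℕ} (i : Fin m) :
    (Measure.pi fun _ : Fin m => μ).map (fun ω => ω i) = μ := by
  ext s hs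
  rw [Measure.map_apply (measurable_pi_apply i) hs]
  have h1 : (fun ω : Fin m → Ω => ω i) ⁻¹' s
      = Set.pi Set.univ (Function.update (fun _ => Set.univ) i s) := Set.eval_preimage
  rw [h1, Measure.pi_pi]
  rw [Finset.prod_eq_single i (fun k _ hk => by simp [Function.update_of_ne hk])
    (fun h => absurd (Finset.mem_univ i) h)]
  simp

lemma pi_map_eval_pair {Ω : Type*} [MeasurableSpace Ω] (μ : Measure Ω) [IsProbabilityMeasure μ]
    {m : ℕ} {i j : Fin m} (hij : i ≠ j) :
    (Measure.pi fun _ : Fin m => μ).map (fun ω => (ω i, ω j)) = μ.prod μ := by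
  symm
  refine (Measure.prod_eq fun s t hs ht => ?_)
  rw [Measure.map_apply ((measurable_pi_apply i).prodMk (measurable_pi_apply j)) (hs.prod ht)]
  have h1 : (fun ω : Fin m → Ω => (ω i, ω j)) ⁻¹' s ×ˢ t
      = Set.pi Set.univ (Function.update (Function.update (fun _ => Set.univ) i s) j t) := by
    ext x
    simp only [Set.mem_preimage, Set.mem_prod, Set.mem_pi, Set.mem_univ, forall_true_left]
    constructor
    · rintro ⟨h1, h2⟩ k
      rcases eq_or_ne k j with rfl | hkj
      · simpa using h2
      rcases eq_or_ne k i with rfl | hki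
      · simpa [Function.update_of_ne hij, hkj] using h1
      · simp [Function.update_of_ne hkj, Function.update_of_ne hki]
    · intro h
      refine ⟨?_, ?_⟩
      · have := h i; simpa [Function.update_of_ne hij] using this
      · have := h j; simpa using this
  rw [h1, Measure.pi_pi]
  have h2 : ∀ k, μ (Function.update (Function.update (fun _ => Set.univ) i s) j t k)
      = Function.update (Function.update (fun _ : Fin m => (1 : ENNReal)) i (μ s)) j (μ t) k := by
    intro k
    rcases eq_or_ne k j with rfl | hkj
    · simp
    rcases eq_or_ne k i with rfl | hki
    · simp [Function.update_of_ne hij, Function.update_of_ne hij]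
    · simp [Function.update_of_ne hkj, Function.update_of_ne hki]
  rw [Finset.prod_congr rfl fun k _ => h2 k]
  rw [Finset.prod_update_of_mem (Finset.mem_univ j)]
  rw [Finset.prod_update_of_mem (by simp [hij] : i ∈ Finset.univ \ {j})]
  simp [mul_comm]

lemma psd_double_integral_nonneg {Ω E : Type*} [MeasurableSpace Ω] [MeasurableSpace E]
    (μ : Measure Ω) [IsProbabilityMeasure μ]
    (y : Ω → ℝ) (xS : Ω → E) (hy : Measurable y) (hxS : Measurable xS)
    {Cy Cκ : ℝ} (hy' : ∀ ω, |y ω| ≤ Cy) (hCy : 0 ≤ Cy) (hCκ : 0 ≤ Cκ)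
    (κS : E → E → ℝ) (hκm : Measurable fun p : E × E => κS p.1 p.2)
    (hκ' : ∀ e e', |κS e e'| ≤ Cκ)
    (hpsd : ∀ (m : ℕ) (c : Fin m → ℝ) (p : Fin m → E),
      0 ≤ ∑ i, ∑ j, c i * c j * κS (p i) (p j)) :
    0 ≤ ∫ ω, ∫ ω', y ω * y ω' * κS (xS ω) (xS ω') ∂μ ∂μ := by
  set H : Ω × Ω → ℝ := fun p => y p.1 * y p.2 * κS (xS p.1) (xS p.2) with hH
  have hHm : Measurable H :=
    ((hy.comp measurable_fst).mul (hy.comp measurable_snd)).mul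
      (hκm.comp ((hxS.comp measurable_fst).prodMk (hxS.comp measurable_snd)))
  have hHb : ∀ p, |H p| ≤ Cy * Cy * Cκ := by
    intro p
    rw [hH, abs_mul, abs_mul]
    exact mul_le_mul (mul_le_mul (hy' _) (hy' _) (abs_nonneg _) hCy) (hκ' _ _)
      (abs_nonneg _) (by positivity)
  have hHint : Integrable H (μ.prod μ) := intble_of_bdd hHm.aestronglyMeasurable hHb
  set Ap := ∫ p, H p ∂(μ.prod μ) with hAp
  set B := ∫ ω, H (ω, ω) ∂μ with hB
  have key : ∀ m : ℕ, 0 ≤ (m : ℝ) * (((m : ℝ) - 1) * Ap + B) := by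
    intro m
    set ν := Measure.pi (fun _ : Fin m => μ) with hν
    have hterm_m : ∀ i j : Fin m, Measurable (fun ω : Fin m → Ω => H (ω i, ω j)) :=
      fun i j => hHm.comp ((measurable_pi_apply i).prodMk (measurable_pi_apply j))
    have hterm_int : ∀ i j : Fin m, Integrable (fun ω : Fin m → Ω => H (ω i, ω j)) ν :=
      fun i j => intble_of_bdd (hterm_m i j).aestronglyMeasurable (fun ω => hHb _)
    have h0 : 0 ≤ ∫ ω, (∑ i, ∑ j, H (ω i, ω j)) ∂ν :=
      integral_nonneg fun ω => hpsd m (fun i => y (ω i)) (fun i => xS (ω i))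
    have hsum : ∫ ω, (∑ i, ∑ j, H (ω i, ω j)) ∂ν = ∑ i, ∑ j, ∫ ω, H (ω i, ω j) ∂ν := by
      rw [integral_finset_sum _ (fun i _ => integrable_finset_sum _ (fun j _ => hterm_int i j))]
      exact Finset.sum_congr rfl fun i _ => integral_finset_sum _ (fun j _ => hterm_int i j)
    have hval : ∀ i j : Fin m, ∫ ω, H (ω i, ω j) ∂ν = if i = j then B else Ap := by
      intro i j
      rcases eq_or_ne i j with rfl | hij
      · rw [if_pos rfl, hB, ← pi_map_eval μ i,
          integral_map (measurable_pi_apply i).aemeasurable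
            (hHm.comp (measurable_id.prodMk measurable_id)).aestronglyMeasurable]
      · rw [if_neg hij, hAp, ← pi_map_eval_pair μ hij,
          integral_map ((measurable_pi_apply i).prodMk (measurable_pi_apply j)).aemeasurable
            hHm.aestronglyMeasurable]
    have hcount : ∑ i : Fin m, ∑ j : Fin m, (if i = j then B else Ap)
        = (m : ℝ) * (((m : ℝ) - 1) * Ap + B) := by
      have hinner : ∀ i : Fin m, ∑ j : Fin m, (if i = j then B else Ap)
          = (m : ℝ) * Ap + (B - Ap) := by
        intro i
        have : ∀ j : Fin m, (if i = j then B else Ap)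
            = Ap + (if j = i then B - Ap else 0) := by
          intro j
          rcases eq_or_ne i j with rfl | hij
          · simp
          · simp [hij, hij.symm]
        rw [Finset.sum_congr rfl fun j _ => this j, Finset.sum_add_distrib,
          Finset.sum_const, Finset.sum_ite_eq' Finset.univ i (fun _ => B - Ap)]
        simp [mul_comm]
      rw [Finset.sum_congr rfl fun i _ => hinner i, Finset.sum_const]
      simp only [Finset.card_univ, Fintype.card_fin, nsmul_eq_mul]
      ring
    calc (0:ℝ) ≤ ∫ ω, (∑ i, ∑ j, H (ω i, ω j)) ∂ν := h0
      _ = ∑ i, ∑ j, ∫ ω, H (ω i, ω j) ∂ν := hsum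
      _ = ∑ i : Fin m, ∑ j : Fin m, (if i = j then B else Ap) :=
          Finset.sum_congr rfl fun i _ => Finset.sum_congr rfl fun j _ => hval i j
      _ = (m : ℝ) * (((m : ℝ) - 1) * Ap + B) := hcount
  have hApnn : 0 ≤ Ap := by
    by_contra hneg
    push_neg at hneg
    set m : ℕ := ⌈(B + 1) / (-Ap)⌉₊ + 1 with hm
    have h1 : ((m : ℝ) - 1) = (⌈(B + 1) / (-Ap)⌉₊ : ℝ) := by
      rw [hm]; push_cast; ring
    have h2 : (B + 1) / (-Ap) ≤ ((m : ℝ) - 1) := by rw [h1]; exact Nat.le_ceil _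
    have h3 : B + 1 ≤ ((m : ℝ) - 1) * (-Ap) := by
      rw [div_le_iff₀ (by linarith : (0:ℝ) < -Ap)] at h2
      linarith [h2]
    have h4 := key m
    have h5 : (0:ℝ) < (m : ℝ) := by positivity
    nlinarith [h4, h3, h5]
  have hA : ∫ ω, ∫ ω', y ω * y ω' * κS (xS ω) (xS ω') ∂μ ∂μ = Ap := by
    rw [hAp]
    exact integral_integral hHint
  rw [hA]; exact hApnn

set_option maxHeartbeats 1000000

theorem stmt5 {Ω E : Type*} [MeasurableSpace Ω] [MeasurableSpace E]
    (μ : Measure Ω) [IsProbabilityMeasure μ]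
    (y : Ω → ℝ) (xS : Ω → E) (xi : Ω → ℝ)
    (hy : Measurable y) (hxS : Measurable xS) (hxi : Measurable xi)
    (hyb : ∃ C : ℝ, ∀ ω, |y ω| ≤ C)
    (hindep : IndepFun xi (fun ω => (xS ω, y ω)) μ)
    (κS : E → E → ℝ) (hκm : Measurable fun p : E × E => κS p.1 p.2)
    (hκb : ∃ C : ℝ, ∀ e e', |κS e e'| ≤ C)
    (hpsd : ∀ (m : ℕ) (c : Fin m → ℝ) (p : Fin m → E),
      0 ≤ ∑ i, ∑ j, c i * c j * κS (p i) (p j))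
    (γ : ℝ) (hγ : 0 ≤ γ) :
    (∫ ω, ∫ ω', y ω * y ω' * κS (xS ω) (xS ω') *
        Real.exp (-γ * (xi ω - xi ω') ^ 2) ∂μ ∂μ)
      ≤ ∫ ω, ∫ ω', y ω * y ω' * κS (xS ω) (xS ω') ∂μ ∂μ := by
  obtain ⟨Cy0, hCy0⟩ := hyb
  obtain ⟨Cκ0, hCκ0⟩ := hκb
  set Cy : ℝ := max Cy0 0 with hCydef
  set Cκ : ℝ := max Cκ0 0 with hCκdef
  have hy' : ∀ ω, |y ω| ≤ Cy := fun ω => le_trans (hCy0 ω) (le_max_left _ _)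
  have hκ' : ∀ e e', |κS e e'| ≤ Cκ := fun e e' => le_trans (hCκ0 e e') (le_max_left _ _)
  have hCy : (0:ℝ) ≤ Cy := le_max_right _ _
  have hCκ : (0:ℝ) ≤ Cκ := le_max_right _ _
  set P : Ω → E × ℝ := fun ω => (xS ω, y ω) with hPdef
  have hPm : Measurable P := hxS.prodMk hy
  -- the functions F and G
  set F : E → ℝ := fun e => ∫ ω', y ω' * κS e (xS ω') ∂μ with hFdef
  set G : ℝ → ℝ := fun t => ∫ ω', Real.exp (-γ * (t - xi ω') ^ 2) ∂μ with hGdef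
  have hfm : Measurable (fun q : E × Ω => y q.2 * κS q.1 (xS q.2)) :=
    (hy.comp measurable_snd).mul
      (hκm.comp (measurable_fst.prodMk (hxS.comp measurable_snd)))
  have hFm : Measurable F := by
    have h := MeasureTheory.StronglyMeasurable.integral_prod_right' (ν := μ)
      (f := fun q : E × Ω => y q.2 * κS q.1 (xS q.2)) hfm.stronglyMeasurable
    exact h.measurable
  have hgm : Measurable (fun q : ℝ × Ω => Real.exp (-γ * (q.1 - xi q.2) ^ 2)) :=
    (measurable_const.mul
      ((measurable_fst.sub (hxi.comp measurable_snd)).pow_const 2)).exp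
  have hGm : Measurable G := by
    have h := MeasureTheory.StronglyMeasurable.integral_prod_right' (ν := μ)
      (f := fun q : ℝ × Ω => Real.exp (-γ * (q.1 - xi q.2) ^ 2)) hgm.stronglyMeasurable
    exact h.measurable
  have hFb : ∀ e, |F e| ≤ Cy * Cκ := by
    intro e
    show |∫ ω', y ω' * κS e (xS ω') ∂μ| ≤ Cy * Cκ
    have h := norm_integral_le_of_norm_le_const (μ := μ)
      (f := fun ω' => y ω' * κS e (xS ω')) (C := Cy * Cκ)
      (ae_of_all _ fun ω' => by
        rw [Real.norm_eq_abs, abs_mul]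
        exact mul_le_mul (hy' _) (hκ' _ _) (abs_nonneg _) hCy)
    rw [probReal_univ, mul_one] at h
    rw [← Real.norm_eq_abs]
    exact h
  have hexp_le_one : ∀ t u : ℝ, Real.exp (-γ * (t - u) ^ 2) ≤ 1 := by
    intro t u
    rw [show (1:ℝ) = Real.exp 0 by simp]
    exact Real.exp_le_exp.mpr (by nlinarith [sq_nonneg (t - u)])
  have hGnn : ∀ t, 0 ≤ G t := fun t => integral_nonneg fun ω' => (Real.exp_pos _).le
  have hGle1 : ∀ t, G t ≤ 1 := by
    intro t
    have h := norm_integral_le_of_norm_le_const (μ := μ)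
      (f := fun ω' => Real.exp (-γ * (t - xi ω') ^ 2)) (C := 1)
      (ae_of_all _ fun ω' => by
        rw [Real.norm_eq_abs, abs_of_pos (Real.exp_pos _)]
        exact hexp_le_one _ _)
    rw [probReal_univ, mul_one] at h
    show (∫ ω', Real.exp (-γ * (t - xi ω') ^ 2) ∂μ) ≤ 1
    calc (∫ ω', Real.exp (-γ * (t - xi ω') ^ 2) ∂μ)
        ≤ ‖∫ ω', Real.exp (-γ * (t - xi ω') ^ 2) ∂μ‖ := le_abs_self _
      _ ≤ 1 := h
  -- inner integral factorization
  have hinner : ∀ ω, (∫ ω', y ω * y ω' * κS (xS ω) (xS ω') *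
      Real.exp (-γ * (xi ω - xi ω') ^ 2) ∂μ) = y ω * (G (xi ω) * F (xS ω)) := by
    intro ω
    set φ : ℝ → ℝ := fun u => Real.exp (-γ * (xi ω - u) ^ 2) with hφdef
    set ψ : E × ℝ → ℝ := fun q => q.2 * κS (xS ω) q.1 with hψdef
    have hφm : Measurable φ :=
      (measurable_const.mul
        ((measurable_const.sub measurable_id).pow_const 2)).exp
    have hψm : Measurable ψ :=
      measurable_snd.mul (hκm.comp (measurable_const.prodMk measurable_fst))
    have hrw : (fun ω' => y ω * y ω' * κS (xS ω) (xS ω') *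
        Real.exp (-γ * (xi ω - xi ω') ^ 2))
        = fun ω' => y ω * ((φ ∘ xi) ω' * (ψ ∘ P) ω') := by
      funext ω'
      simp only [Function.comp_apply, hφdef, hψdef, hPdef]
      ring
    rw [hrw, integral_const_mul]
    congr 1
    have hind : IndepFun (φ ∘ xi) (ψ ∘ P) μ := hindep.comp hφm hψm
    have hmul := hind.integral_fun_mul_eq_mul_integral ((hφm.comp hxi).aestronglyMeasurable)
      ((hψm.comp hPm).aestronglyMeasurable)
    rw [hmul]
    rfl
  -- outer integral factorization
  set Ψ : E × ℝ → ℝ := fun q => q.2 * F q.1 with hΨdef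
  have hΨm : Measurable Ψ := measurable_snd.mul (hFm.comp measurable_fst)
  have houter : (∫ ω, y ω * (G (xi ω) * F (xS ω)) ∂μ)
      = (∫ ω, (G ∘ xi) ω ∂μ) * (∫ ω, (Ψ ∘ P) ω ∂μ) := by
    have hrw : (fun ω => y ω * (G (xi ω) * F (xS ω)))
        = fun ω => (G ∘ xi) ω * (Ψ ∘ P) ω := by
      funext ω
      simp only [Function.comp_apply, hΨdef, hPdef]
      ring
    rw [hrw]
    exact (hindep.comp hGm hΨm).integral_fun_mul_eq_mul_integral ((hGm.comp hxi).aestronglyMeasurable)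
      ((hΨm.comp hPm).aestronglyMeasurable)
  have hΨP : (∫ ω, (Ψ ∘ P) ω ∂μ) = ∫ ω, ∫ ω', y ω * y ω' * κS (xS ω) (xS ω') ∂μ ∂μ := by
    refine integral_congr_ae (ae_of_all _ fun ω => ?_)
    show y ω * F (xS ω) = _
    rw [hFdef, ← integral_const_mul]
    refine integral_congr_ae (ae_of_all _ fun ω' => ?_)
    ring
  set α : ℝ := ∫ ω, (G ∘ xi) ω ∂μ with hαdef
  have hαnn : 0 ≤ α := integral_nonneg fun ω => hGnn _
  have hαle1 : α ≤ 1 := by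
    have hint : Integrable (fun ω => (G ∘ xi) ω) μ :=
      intble_of_bdd ((hGm.comp hxi)).aestronglyMeasurable
        (C := 1) (fun ω => by
          rw [Function.comp_apply]
          exact abs_le.mpr ⟨by linarith [hGnn (xi ω)], hGle1 _⟩)
    calc α ≤ ∫ _ω, (1:ℝ) ∂μ := integral_mono hint (integrable_const 1) fun ω => hGle1 _
      _ = 1 := by simp
  have hA : 0 ≤ ∫ ω, ∫ ω', y ω * y ω' * κS (xS ω) (xS ω') ∂μ ∂μ :=
    psd_double_integral_nonneg μ y xS hy hxS hy' hCy hCκ κS hκm hκ' hpsd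
  calc (∫ ω, ∫ ω', y ω * y ω' * κS (xS ω) (xS ω') *
        Real.exp (-γ * (xi ω - xi ω') ^ 2) ∂μ ∂μ)
      = ∫ ω, y ω * (G (xi ω) * F (xS ω)) ∂μ :=
        integral_congr_ae (ae_of_all _ hinner)
    _ = α * (∫ ω, ∫ ω', y ω * y ω' * κS (xS ω) (xS ω') ∂μ ∂μ) := by
        rw [houter, hΨP]
    _ ≤ ∫ ω, ∫ ω', y ω * y ω' * κS (xS ω) (xS ω') ∂μ ∂μ :=
        mul_le_of_le_one_left hA hαle1
end

section
/- Under the hypotheses of the previous statement, if additionally γ > 0, A_S > 0, and x_i is not almost surely constant, then A_{S∪{i}} < A_S: adding the irrelevant feature strictly decreases the expected alignment. -/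
open MeasureTheory ProbabilityTheory

theorem stmt6 {Ω E : Type*} [MeasurableSpace Ω] [MeasurableSpace E]
    (μ : Measure Ω) [IsProbabilityMeasure μ]
    (y : Ω → ℝ) (xS : Ω → E) (xi : Ω → ℝ)
    (hy : Measurable y) (hxS : Measurable xS) (hxi : Measurable xi)
    (hyb : ∃ C : ℝ, ∀ ω, |y ω| ≤ C)
    (hindep : IndepFun xi (fun ω => (xS ω, y ω)) μ)
    (κS : E → E → ℝ) (hκm : Measurable fun p : E × E => κS p.1 p.2)
    (hκb : ∃ C : ℝ, ∀ e e', |κS e e'| ≤ C)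
    (hpsd : ∀ (m : ℕ) (c : Fin m → ℝ) (p : Fin m → E),
      0 ≤ ∑ i, ∑ j, c i * c j * κS (p i) (p j))
    (γ : ℝ) (hγ : 0 < γ)
    (hAS : 0 < ∫ ω, ∫ ω', y ω * y ω' * κS (xS ω) (xS ω') ∂μ ∂μ)
    (hnc : ¬ ∃ c : ℝ, ∀ᵐ ω ∂μ, xi ω = c) :
    (∫ ω, ∫ ω', y ω * y ω' * κS (xS ω) (xS ω') *
        Real.exp (-γ * (xi ω - xi ω') ^ 2) ∂μ ∂μ)
      < ∫ ω, ∫ ω', y ω * y ω' * κS (xS ω) (xS ω') ∂μ ∂μ := by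
  obtain ⟨Cy, hCy⟩ := hyb
  obtain ⟨Cκ, hCκ⟩ := hκb
  -- auxiliary functions
  set h1 : ℝ → ℝ := fun t => ∫ ω', Real.exp (-γ * (t - xi ω') ^ 2) ∂μ with hh1
  set h2 : E → ℝ := fun s => ∫ ω', y ω' * κS s (xS ω') ∂μ with hh2
  -- measurability of h1, h2
  have hexp_m : ∀ t : ℝ, Measurable fun ω' => Real.exp (-γ * (t - xi ω') ^ 2) :=
    fun t => Real.measurable_exp.comp
      (measurable_const.mul ((measurable_const.sub hxi).pow measurable_const))
  have hexple : ∀ t (ω' : Ω), Real.exp (-γ * (t - xi ω') ^ 2) ≤ 1 := by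
    intro t ω'
    rw [show (1:ℝ) = Real.exp 0 by simp]
    apply Real.exp_le_exp.mpr
    have : 0 ≤ γ * (t - xi ω') ^ 2 := mul_nonneg hγ.le (sq_nonneg _)
    nlinarith
  have hexppos : ∀ t (ω' : Ω), 0 < Real.exp (-γ * (t - xi ω') ^ 2) := fun _ _ => Real.exp_pos _
  have hexp_int : ∀ t : ℝ, Integrable (fun ω' => Real.exp (-γ * (t - xi ω') ^ 2)) μ := by
    intro t
    refine Integrable.mono' (integrable_const (1:ℝ)) (hexp_m t).aestronglyMeasurable ?_
    filter_upwards with ω'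
    rw [Real.norm_eq_abs, abs_of_pos (hexppos t ω')]
    exact hexple t ω'
  have h1m : Measurable h1 := by
    have hm : StronglyMeasurable fun p : ℝ × Ω => Real.exp (-γ * (p.1 - xi p.2) ^ 2) :=
      (Real.measurable_exp.comp (measurable_const.mul
        ((measurable_fst.sub (hxi.comp measurable_snd)).pow
          measurable_const))).stronglyMeasurable
    exact hm.integral_prod_right'.measurable
  have h2m : Measurable h2 := by
    have hm : StronglyMeasurable fun p : E × Ω => y p.2 * κS p.1 (xS p.2) := by
      apply Measurable.stronglyMeasurable
      exact (hy.comp measurable_snd).mul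
        (hκm.comp (measurable_fst.prodMk (hxS.comp measurable_snd)))
    exact hm.integral_prod_right'.measurable
  -- bounds on h1
  have h1le : ∀ t, h1 t ≤ 1 := by
    intro t
    calc h1 t ≤ ∫ _ω' , (1:ℝ) ∂μ := by
          apply integral_mono (hexp_int t) (integrable_const 1)
          intro ω'; exact hexple t ω'
      _ = 1 := by simp
  -- independence compositions
  have hindep' : ∀ (f : ℝ → ℝ) (g : E × ℝ → ℝ), Measurable f → Measurable g →
      IndepFun (fun ω => f (xi ω)) (fun ω => g (xS ω, y ω)) μ := by
    intro f g hf hg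
    exact hindep.comp hf hg
  -- Step A: inner integral factorization
  have stepA : ∀ ω, (∫ ω', y ω * y ω' * κS (xS ω) (xS ω') *
      Real.exp (-γ * (xi ω - xi ω') ^ 2) ∂μ)
      = y ω * (h1 (xi ω) * h2 (xS ω)) := by
    intro ω
    have hre : ∀ ω', y ω * y ω' * κS (xS ω) (xS ω') * Real.exp (-γ * (xi ω - xi ω') ^ 2)
        = y ω * ((fun ω' => Real.exp (-γ * (xi ω - xi ω') ^ 2)) ω' *
            (fun ω' => y ω' * κS (xS ω) (xS ω')) ω') := by
      intro ω'; ring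
    rw [show (∫ ω', y ω * y ω' * κS (xS ω) (xS ω') *
        Real.exp (-γ * (xi ω - xi ω') ^ 2) ∂μ)
      = ∫ ω', y ω * ((fun ω' => Real.exp (-γ * (xi ω - xi ω') ^ 2)) ω' *
            (fun ω' => y ω' * κS (xS ω) (xS ω')) ω') ∂μ from integral_congr_ae
        (Filter.Eventually.of_forall hre)]
    rw [integral_const_mul]
    congr 1
    have hi : IndepFun (fun ω' => Real.exp (-γ * (xi ω - xi ω') ^ 2))
        (fun ω' => y ω' * κS (xS ω) (xS ω')) μ := by
      have := hindep' (fun t => Real.exp (-γ * (xi ω - t) ^ 2))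
        (fun p => p.2 * κS (xS ω) p.1)
        ((Real.continuous_exp.measurable).comp
          ((measurable_const.mul ((measurable_const.sub measurable_id).pow measurable_const))))
        (measurable_snd.mul (hκm.comp (measurable_const.prodMk measurable_fst)))
      exact this
    have := hi.integral_fun_mul_eq_mul_integral
      (hexp_m (xi ω)).aestronglyMeasurable
      ((hy.mul (hκm.comp (measurable_const.prodMk hxS))).aestronglyMeasurable)
    exact this
  -- Step C: RHS as single integral
  have stepC : (∫ ω, ∫ ω', y ω * y ω' * κS (xS ω) (xS ω') ∂μ ∂μ)
      = ∫ ω, y ω * h2 (xS ω) ∂μ := by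
    apply integral_congr_ae
    filter_upwards with ω
    have : ∀ ω', y ω * y ω' * κS (xS ω) (xS ω') = y ω * (y ω' * κS (xS ω) (xS ω')) := by
      intro ω'; ring
    rw [integral_congr_ae (Filter.Eventually.of_forall this), integral_const_mul]
  -- Step B: outer integral factorization
  set α : ℝ := ∫ ω, h1 (xi ω) ∂μ with hα
  have stepB : (∫ ω, y ω * (h1 (xi ω) * h2 (xS ω)) ∂μ)
      = α * ∫ ω, y ω * h2 (xS ω) ∂μ := by
    have hre : ∀ ω, y ω * (h1 (xi ω) * h2 (xS ω))
        = (fun ω => h1 (xi ω)) ω * (fun ω => y ω * h2 (xS ω)) ω := by intro ω; ring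
    rw [integral_congr_ae (Filter.Eventually.of_forall hre)]
    have hi : IndepFun (fun ω => h1 (xi ω)) (fun ω => y ω * h2 (xS ω)) μ :=
      hindep' h1 (fun p => p.2 * h2 p.1) h1m (measurable_snd.mul (h2m.comp measurable_fst))
    have := hi.integral_fun_mul_eq_mul_integral (h1m.comp hxi).aestronglyMeasurable
      (hy.mul (h2m.comp hxS)).aestronglyMeasurable
    exact this
  -- α ≤ 1
  have h1xi_int : Integrable (fun ω => h1 (xi ω)) μ := by
    refine Integrable.mono' (integrable_const (1:ℝ))
      ((h1m.comp hxi)).aestronglyMeasurable ?_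
    filter_upwards with ω
    rw [Real.norm_eq_abs, abs_le]
    constructor
    · have : (0:ℝ) ≤ h1 (xi ω) := integral_nonneg fun ω' => (hexppos _ ω').le
      linarith
    · exact h1le _
  have hαle : α ≤ 1 := by
    calc α ≤ ∫ _ω, (1:ℝ) ∂μ := integral_mono h1xi_int (integrable_const 1) fun ω => h1le _
      _ = 1 := by simp
  -- α < 1
  have hαlt : α < 1 := by
    rcases lt_or_eq_of_le hαle with h | h
    · exact h
    exfalso
    -- α = 1 : then h1 (xi ω) = 1 a.e.
    have hsub : (∫ ω, (1 - h1 (xi ω)) ∂μ) = 0 := by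
      rw [integral_sub (integrable_const 1) h1xi_int]
      simp [← hα, h]
    have hae : (fun ω => 1 - h1 (xi ω)) =ᵐ[μ] 0 :=
      (integral_eq_zero_iff_of_nonneg (f := fun ω => 1 - h1 (xi ω))
        (fun ω => by simpa using h1le (xi ω))
        ((integrable_const (1:ℝ)).sub h1xi_int)).mp hsub
    have hne : (ae μ).NeBot := ae_neBot.2 (IsProbabilityMeasure.ne_zero μ)
    obtain ⟨ω₀, hω₀⟩ := hae.exists
    simp only [Pi.zero_apply, sub_eq_zero] at hω₀
    -- then exp(-γ (xi ω₀ - xi ω')²) = 1 a.e. ω'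
    have hsub2 : (∫ ω', (1 - Real.exp (-γ * (xi ω₀ - xi ω') ^ 2)) ∂μ) = 0 := by
      rw [integral_sub (integrable_const 1) (hexp_int (xi ω₀))]
      simp only [integral_const, measure_univ, ENNReal.toReal_one, probReal_univ, smul_eq_mul, one_mul]
      rw [show (∫ ω', Real.exp (-γ * (xi ω₀ - xi ω') ^ 2) ∂μ) = h1 (xi ω₀) from rfl, ← hω₀]
      ring
    have hae2 : (fun ω' => 1 - Real.exp (-γ * (xi ω₀ - xi ω') ^ 2)) =ᵐ[μ] 0 :=
      (integral_eq_zero_iff_of_nonneg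
        (f := fun ω' => 1 - Real.exp (-γ * (xi ω₀ - xi ω') ^ 2))
        (fun ω' => by simpa using hexple (xi ω₀) ω')
        ((integrable_const (1:ℝ)).sub (hexp_int (xi ω₀)))).mp hsub2
    apply hnc
    refine ⟨xi ω₀, ?_⟩
    filter_upwards [hae2] with ω' hω'
    simp only [Pi.zero_apply, sub_eq_zero] at hω'
    have hz : -γ * (xi ω₀ - xi ω') ^ 2 = 0 := by
      have : Real.exp (-γ * (xi ω₀ - xi ω') ^ 2) = Real.exp 0 := by
        rw [Real.exp_zero]; linarith
      exact Real.exp_injective this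
    have h2' : (xi ω₀ - xi ω') ^ 2 = 0 := by
      rcases mul_eq_zero.mp hz with h | h
      · exfalso; linarith
      · exact h
    have := pow_eq_zero_iff (n := 2) (by norm_num) |>.mp h2'
    linarith
  -- conclude
  have hLHS : (∫ ω, ∫ ω', y ω * y ω' * κS (xS ω) (xS ω') *
      Real.exp (-γ * (xi ω - xi ω') ^ 2) ∂μ ∂μ)
      = α * ∫ ω, y ω * h2 (xS ω) ∂μ := by
    rw [integral_congr_ae (Filter.Eventually.of_forall stepA)]
    exact stepB
  rw [hLHS, stepC]
  rw [stepC] at hAS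
  calc α * ∫ ω, y ω * h2 (xS ω) ∂μ < 1 * ∫ ω, y ω * h2 (xS ω) ∂μ := by
        exact mul_lt_mul_of_pos_right hαlt hAS
    _ = ∫ ω, y ω * h2 (xS ω) ∂μ := one_mul _
end

section
/- Let S be a finite set of feature indices and γ > 0. Suppose the random variables {x_j}_{j∈S∪{i}} and y satisfy: x_i is independent of ({x_j}_{j∈S}, y), and define the contribution c_i = A_{S∪{i}} - A_S where A_T = E[y y' ∏_{j∈T} exp(-γ(x_j - x_j')²)] over iid pairs. Then c_i = (α - 1) A_S where α = E[exp(-γ(x_i - x_i')²)] ∈ (0,1]; in particular c_i ≤ 0. -/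
open MeasureTheory ProbabilityTheory

set_option maxHeartbeats 1000000
open MeasureTheory ProbabilityTheory

lemma gauss_key {γ : ℝ} (a b t : ℝ) :
    Real.exp (-(2*γ) * (a - t)^2) * Real.exp (-(2*γ) * (b - t)^2)
      = Real.exp (-(4*γ) * (t - (a+b)/2)^2) * Real.exp (-γ * (a - b)^2) := by
  rw [← Real.exp_add, ← Real.exp_add]; congr 1; ring

lemma gauss_conv {γ : ℝ} (a b : ℝ) :
    ∫ t : ℝ, Real.exp (-(2*γ) * (a - t)^2) * Real.exp (-(2*γ) * (b - t)^2)
      = Real.sqrt (Real.pi / (4*γ)) * Real.exp (-γ * (a - b)^2) := by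
  simp_rw [gauss_key a b]
  rw [MeasureTheory.integral_mul_const]
  congr 1
  have h := MeasureTheory.integral_sub_right_eq_self (μ := volume)
    (fun t : ℝ => Real.exp (-(4*γ) * t^2)) ((a+b)/2)
  rw [h]
  exact integral_gaussian (4*γ)

lemma gauss_conv_integrable {γ : ℝ} (hγ : 0 < γ) (a b : ℝ) :
    Integrable (fun t : ℝ => Real.exp (-(2*γ) * (a - t)^2) * Real.exp (-(2*γ) * (b - t)^2)) := by
  have h4 : (0:ℝ) < 4*γ := by linarith
  have h : Integrable (fun t : ℝ =>
      Real.exp (-(4*γ) * (t - (a+b)/2)^2) * Real.exp (-γ * (a - b)^2)) :=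
    ((integrable_exp_neg_mul_sq h4).comp_sub_right _).mul_const _
  simpa only [← gauss_key a b] using h

lemma kernel_nonneg {Ω κ : Type*} [MeasurableSpace Ω] [Fintype κ]
    (μ : Measure Ω) [IsProbabilityMeasure μ]
    (x : κ → Ω → ℝ) (y : Ω → ℝ) (hx : ∀ j, Measurable (x j)) (hy : Measurable y)
    {C : ℝ} (hC : 0 ≤ C) (hyb : ∀ ω, |y ω| ≤ C) {γ : ℝ} (hγ : 0 < γ) :
    0 ≤ ∫ ω, ∫ ω', y ω * y ω' * ∏ j, Real.exp (-γ * (x j ω - x j ω') ^ 2) ∂μ ∂μ := by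
  have hc : 0 < Real.sqrt (Real.pi / (4*γ)) := Real.sqrt_pos.2 (by positivity)
  set c : ℝ := Real.sqrt (Real.pi / (4*γ)) with hc_def
  set n : ℕ := Fintype.card κ with hn_def
  -- measurability of the kernel on Ω × Ω
  have hk_meas : Measurable (fun p : Ω × Ω => ∏ j, Real.exp (-γ * (x j p.1 - x j p.2) ^ 2)) := by
    apply Finset.measurable_prod
    intro j _
    exact Real.measurable_exp.comp (measurable_const.mul
      ((((hx j).comp measurable_fst).sub ((hx j).comp measurable_snd)).pow measurable_const))
  have hk_le_one : ∀ p : Ω × Ω, (∏ j, Real.exp (-γ * (x j p.1 - x j p.2) ^ 2)) ≤ 1 := by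
    intro p
    apply Finset.prod_le_one (fun j _ => (Real.exp_pos _).le)
    intro j _
    exact Real.exp_le_one_iff.2 (by nlinarith [sq_nonneg (x j p.1 - x j p.2)])
  have hk_nonneg : ∀ p : Ω × Ω, 0 ≤ ∏ j, Real.exp (-γ * (x j p.1 - x j p.2) ^ 2) :=
    fun p => Finset.prod_nonneg (fun j _ => (Real.exp_pos _).le)
  -- claim 1
  have claim1 : ∀ ω ω' : Ω,
      (∫ T : κ → ℝ, ∏ j, (Real.exp (-(2*γ) * (x j ω - T j)^2) * Real.exp (-(2*γ) * (x j ω' - T j)^2)))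
        = c ^ n * ∏ j, Real.exp (-γ * (x j ω - x j ω') ^ 2) := by
    intro ω ω'
    rw [MeasureTheory.integral_fintype_prod_volume_eq_prod (𝕜 := ℝ) (ι := κ)
      (fun j t => Real.exp (-(2*γ) * (x j ω - t)^2) * Real.exp (-(2*γ) * (x j ω' - t)^2))]
    have e2 : ∀ j : κ, (∫ t : ℝ, Real.exp (-(2*γ) * (x j ω - t)^2) * Real.exp (-(2*γ) * (x j ω' - t)^2))
        = c * Real.exp (-γ * (x j ω - x j ω') ^ 2) := fun j => gauss_conv _ _
    simp_rw [e2, Finset.prod_mul_distrib, Finset.prod_const, Finset.card_univ]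
    rfl
  -- the big function
  have hG_meas : Measurable (fun q : (Ω × Ω) × (κ → ℝ) =>
      (y q.1.1 * ∏ j, Real.exp (-(2*γ) * (x j q.1.1 - q.2 j)^2)) *
      (y q.1.2 * ∏ j, Real.exp (-(2*γ) * (x j q.1.2 - q.2 j)^2))) := by
    have h1 : Measurable (fun q : (Ω × Ω) × (κ → ℝ) => ∏ j, Real.exp (-(2*γ) * (x j q.1.1 - q.2 j)^2)) := by
      apply Finset.measurable_prod
      intro j _
      have hj : Measurable fun q : (Ω × Ω) × (κ → ℝ) => q.2 j := (measurable_pi_apply j).comp measurable_snd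
      have hxj : Measurable fun q : (Ω × Ω) × (κ → ℝ) => x j q.1.1 := (hx j).comp (measurable_fst.comp measurable_fst)
      exact Real.measurable_exp.comp (measurable_const.mul ((hxj.sub hj).pow measurable_const))
    have h2 : Measurable (fun q : (Ω × Ω) × (κ → ℝ) => ∏ j, Real.exp (-(2*γ) * (x j q.1.2 - q.2 j)^2)) := by
      apply Finset.measurable_prod
      intro j _
      have hj : Measurable fun q : (Ω × Ω) × (κ → ℝ) => q.2 j := (measurable_pi_apply j).comp measurable_snd
      have hxj : Measurable fun q : (Ω × Ω) × (κ → ℝ) => x j q.1.2 := (hx j).comp (measurable_snd.comp measurable_fst)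
      exact Real.measurable_exp.comp (measurable_const.mul ((hxj.sub hj).pow measurable_const))
    exact ((hy.comp (measurable_fst.comp measurable_fst)).mul h1).mul
      ((hy.comp (measurable_snd.comp measurable_fst)).mul h2)
  -- slices are integrable
  have hslice : ∀ p : Ω × Ω, Integrable (fun T : κ → ℝ =>
      (y p.1 * ∏ j, Real.exp (-(2*γ) * (x j p.1 - T j)^2)) *
      (y p.2 * ∏ j, Real.exp (-(2*γ) * (x j p.2 - T j)^2))) := by
    intro p
    have h1 : Integrable (fun T : κ → ℝ =>
        ∏ j, (Real.exp (-(2*γ) * (x j p.1 - T j)^2) * Real.exp (-(2*γ) * (x j p.2 - T j)^2))) :=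
      Integrable.fintype_prod (fun j => gauss_conv_integrable hγ _ _)
    have h2 := h1.const_mul (y p.1 * y p.2)
    apply h2.congr
    filter_upwards with T
    rw [Finset.prod_mul_distrib]
    exact (mul_mul_mul_comm _ _ _ _)
  -- norm integral over T of slices
  have hnorm : ∀ p : Ω × Ω, (∫ T : κ → ℝ, ‖(y p.1 * ∏ j, Real.exp (-(2*γ) * (x j p.1 - T j)^2)) *
      (y p.2 * ∏ j, Real.exp (-(2*γ) * (x j p.2 - T j)^2))‖)
      = |y p.1 * y p.2| * (c ^ n * ∏ j, Real.exp (-γ * (x j p.1 - x j p.2) ^ 2)) := by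
    intro p
    have e : ∀ T : κ → ℝ, ‖(y p.1 * ∏ j, Real.exp (-(2*γ) * (x j p.1 - T j)^2)) *
        (y p.2 * ∏ j, Real.exp (-(2*γ) * (x j p.2 - T j)^2))‖
        = |y p.1 * y p.2| * ∏ j, (Real.exp (-(2*γ) * (x j p.1 - T j)^2) * Real.exp (-(2*γ) * (x j p.2 - T j)^2)) := by
      intro T
      rw [Real.norm_eq_abs, abs_mul, abs_mul, abs_mul, abs_mul, Finset.prod_mul_distrib]
      rw [abs_of_nonneg (Finset.prod_nonneg fun j _ => (Real.exp_pos _).le),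
        abs_of_nonneg (Finset.prod_nonneg fun j _ => (Real.exp_pos _).le)]
      exact mul_mul_mul_comm _ _ _ _
    simp_rw [e]
    rw [MeasureTheory.integral_const_mul, claim1 p.1 p.2]
  -- integrability of G on the big product measure
  have hGint : Integrable (fun q : (Ω × Ω) × (κ → ℝ) =>
      (y q.1.1 * ∏ j, Real.exp (-(2*γ) * (x j q.1.1 - q.2 j)^2)) *
      (y q.1.2 * ∏ j, Real.exp (-(2*γ) * (x j q.1.2 - q.2 j)^2))) ((μ.prod μ).prod volume) := by
    rw [MeasureTheory.integrable_prod_iff hG_meas.aestronglyMeasurable]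
    constructor
    · exact Filter.Eventually.of_forall hslice
    · apply MeasureTheory.Integrable.mono' (integrable_const (C * C * (c ^ n)))
      · exact (hG_meas.norm.stronglyMeasurable.integral_prod_right').aestronglyMeasurable
      · filter_upwards with p
        rw [Real.norm_eq_abs, abs_of_nonneg (integral_nonneg fun T => norm_nonneg _), hnorm p]
        have h1 : |y p.1 * y p.2| ≤ C * C := by
          rw [abs_mul]
          exact mul_le_mul (hyb p.1) (hyb p.2) (abs_nonneg _) hC
        have h2 : c ^ n * ∏ j, Real.exp (-γ * (x j p.1 - x j p.2) ^ 2) ≤ c ^ n * 1 :=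
          mul_le_mul_of_nonneg_left (hk_le_one p) (by positivity)
        calc |y p.1 * y p.2| * (c ^ n * ∏ j, Real.exp (-γ * (x j p.1 - x j p.2) ^ 2))
            ≤ (C * C) * (c ^ n * 1) := by
              apply mul_le_mul h1 h2 (by positivity) (by positivity)
          _ = C * C * c ^ n := by ring
  -- the inner kernel integrand is integrable on μ.prod μ
  have hAint : Integrable (fun p : Ω × Ω =>
      y p.1 * y p.2 * ∏ j, Real.exp (-γ * (x j p.1 - x j p.2) ^ 2)) (μ.prod μ) := by
    apply MeasureTheory.Integrable.mono' (integrable_const (C * C))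
    · exact (((hy.comp measurable_fst).mul (hy.comp measurable_snd)).mul hk_meas).aestronglyMeasurable
    · filter_upwards with p
      rw [Real.norm_eq_abs, abs_mul, abs_mul]
      rw [abs_of_nonneg (hk_nonneg p)]
      calc |y p.1| * |y p.2| * (∏ j, Real.exp (-γ * (x j p.1 - x j p.2) ^ 2))
          ≤ (C * C) * 1 := by
            apply mul_le_mul _ (hk_le_one p) (hk_nonneg p) (by positivity)
            exact mul_le_mul (hyb p.1) (hyb p.2) (abs_nonneg _) hC
        _ = C * C := mul_one _
  -- main computation
  have main : c ^ n * (∫ ω, ∫ ω', y ω * y ω' * ∏ j, Real.exp (-γ * (x j ω - x j ω') ^ 2) ∂μ ∂μ)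
      = ∫ T : κ → ℝ, (∫ ω, y ω * ∏ j, Real.exp (-(2*γ) * (x j ω - T j)^2) ∂μ) ^ 2 := by
    rw [← MeasureTheory.integral_prod _ hAint, ← MeasureTheory.integral_const_mul]
    have e1 : ∀ p : Ω × Ω, c ^ n * (y p.1 * y p.2 * ∏ j, Real.exp (-γ * (x j p.1 - x j p.2) ^ 2))
        = ∫ T : κ → ℝ, (y p.1 * ∏ j, Real.exp (-(2*γ) * (x j p.1 - T j)^2)) *
          (y p.2 * ∏ j, Real.exp (-(2*γ) * (x j p.2 - T j)^2)) := by
      intro p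
      have e : ∀ T : κ → ℝ, (y p.1 * ∏ j, Real.exp (-(2*γ) * (x j p.1 - T j)^2)) *
          (y p.2 * ∏ j, Real.exp (-(2*γ) * (x j p.2 - T j)^2))
          = (y p.1 * y p.2) * ∏ j, (Real.exp (-(2*γ) * (x j p.1 - T j)^2) * Real.exp (-(2*γ) * (x j p.2 - T j)^2)) := by
        intro T
        rw [Finset.prod_mul_distrib]
        exact mul_mul_mul_comm _ _ _ _
      simp_rw [e]
      rw [MeasureTheory.integral_const_mul, claim1 p.1 p.2]
      ring
    rw [MeasureTheory.integral_congr_ae (Filter.Eventually.of_forall e1)]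
    rw [← MeasureTheory.integral_prod _ hGint, MeasureTheory.integral_prod_symm _ hGint]
    apply MeasureTheory.integral_congr_ae
    filter_upwards with T
    rw [sq, ← MeasureTheory.integral_prod_mul]
  have rhs_nonneg : 0 ≤ ∫ T : κ → ℝ, (∫ ω, y ω * ∏ j, Real.exp (-(2*γ) * (x j ω - T j)^2) ∂μ) ^ 2 :=
    integral_nonneg fun T => sq_nonneg _
  have := main ▸ rhs_nonneg
  exact nonneg_of_mul_nonneg_right this (by positivity)


theorem stmt11 {Ω ι : Type*} [MeasurableSpace Ω] [DecidableEq ι]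
    (μ : Measure Ω) [IsProbabilityMeasure μ]
    (S : Finset ι) (i : ι) (hi : i ∉ S)
    (x : ι → Ω → ℝ) (y : Ω → ℝ)
    (hx : ∀ j, Measurable (x j)) (hy : Measurable y)
    (hyb : ∃ C : ℝ, ∀ ω, |y ω| ≤ C)
    (hindep : IndepFun (x i) (fun ω => ((fun j : {j // j ∈ S} => x j ω), y ω)) μ)
    (γ : ℝ) (hγ : 0 < γ) :
    letI A : Finset ι → ℝ := fun T =>
      ∫ ω, ∫ ω', y ω * y ω' * ∏ j ∈ T, Real.exp (-γ * (x j ω - x j ω') ^ 2) ∂μ ∂μ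
    letI α : ℝ := ∫ ω, ∫ ω', Real.exp (-γ * (x i ω - x i ω') ^ 2) ∂μ ∂μ
    A (insert i S) - A S = (α - 1) * A S ∧ 0 < α ∧ α ≤ 1 ∧ A (insert i S) - A S ≤ 0 := by
  classical
  obtain ⟨C0, hC0⟩ := hyb
  set C : ℝ := |C0| with hC_def
  have hC : 0 ≤ C := abs_nonneg _
  have hyb' : ∀ ω, |y ω| ≤ C := fun ω => (hC0 ω).trans (le_abs_self C0)
  set AS : ℝ := ∫ ω, ∫ ω', y ω * y ω' * ∏ j ∈ S, Real.exp (-γ * (x j ω - x j ω') ^ 2) ∂μ ∂μ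
    with hAS_def
  set Ai : ℝ := ∫ ω, ∫ ω', y ω * y ω' * ∏ j ∈ insert i S, Real.exp (-γ * (x j ω - x j ω') ^ 2) ∂μ ∂μ
    with hAi_def
  set al : ℝ := ∫ ω, ∫ ω', Real.exp (-γ * (x i ω - x i ω') ^ 2) ∂μ ∂μ with hal_def
  -- nonnegativity of AS
  have hAS_nonneg : 0 ≤ AS := by
    rw [hAS_def]
    have : ∀ ω ω' : Ω, (∏ j ∈ S, Real.exp (-γ * (x j ω - x j ω') ^ 2))
        = ∏ j : {j // j ∈ S}, Real.exp (-γ * (x j ω - x j ω') ^ 2) :=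
      fun ω ω' => (Finset.prod_coe_sort S _).symm
    simp_rw [this]
    exact kernel_nonneg μ (fun j : {j // j ∈ S} => x j) y (fun j => hx j) hy hC hyb' hγ
  -- bounds on alpha
  have he_meas : Measurable (fun p : Ω × Ω => Real.exp (-γ * (x i p.1 - x i p.2) ^ 2)) :=
    Real.measurable_exp.comp (measurable_const.mul
      ((((hx i).comp measurable_fst).sub ((hx i).comp measurable_snd)).pow measurable_const))
  have he_le_one : ∀ p : Ω × Ω, Real.exp (-γ * (x i p.1 - x i p.2) ^ 2) ≤ 1 :=
    fun p => Real.exp_le_one_iff.2 (by nlinarith [sq_nonneg (x i p.1 - x i p.2)])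
  have he_int : Integrable (fun p : Ω × Ω => Real.exp (-γ * (x i p.1 - x i p.2) ^ 2)) (μ.prod μ) := by
    apply MeasureTheory.Integrable.mono' (integrable_const 1) he_meas.aestronglyMeasurable
    filter_upwards with p
    rw [Real.norm_eq_abs, abs_of_nonneg (Real.exp_pos _).le]
    exact he_le_one p
  have hal_prod : al = ∫ p : Ω × Ω, Real.exp (-γ * (x i p.1 - x i p.2) ^ 2) ∂(μ.prod μ) :=
    (MeasureTheory.integral_prod _ he_int).symm
  have hal_pos : 0 < al := by
    rw [hal_prod]
    rw [MeasureTheory.integral_pos_iff_support_of_nonneg_ae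
      (Filter.Eventually.of_forall fun p => (Real.exp_pos _).le) he_int]
    have : Function.support (fun p : Ω × Ω => Real.exp (-γ * (x i p.1 - x i p.2) ^ 2)) = Set.univ := by
      ext p; simp [Function.support, (Real.exp_pos _).ne']
    rw [this]
    simp
  have hal_le : al ≤ 1 := by
    rw [hal_prod]
    calc (∫ p : Ω × Ω, Real.exp (-γ * (x i p.1 - x i p.2) ^ 2) ∂(μ.prod μ))
        ≤ ∫ _ : Ω × Ω, (1:ℝ) ∂(μ.prod μ) :=
          MeasureTheory.integral_mono he_int (integrable_const 1) he_le_one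
      _ = 1 := by simp
  -- factorization
  set Z : Ω → ({j // j ∈ S} → ℝ) × ℝ := fun ω => ((fun j : {j // j ∈ S} => x j ω), y ω) with hZ_def
  have hZm : Measurable Z := by
    rw [hZ_def]; exact (measurable_pi_lambda (fun ω (j : {j // j ∈ S}) => x j ω) (fun j => hx j)).prodMk hy
  set g : (({j // j ∈ S} → ℝ) × ℝ) → (({j // j ∈ S} → ℝ) × ℝ) → ℝ :=
    fun p q => p.2 * q.2 * ∏ j : {j // j ∈ S}, Real.exp (-γ * (p.1 j - q.1 j) ^ 2) with hg_def
  have hgZ : ∀ ω ω', g (Z ω) (Z ω') = y ω * y ω' * ∏ j ∈ S, Real.exp (-γ * (x j ω - x j ω') ^ 2) := by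
    intro ω ω'
    rw [hg_def]
    simp only [hZ_def]
    congr 1
    exact Finset.prod_coe_sort S (fun j => Real.exp (-γ * (x j ω - x j ω') ^ 2))
  have hg_meas : ∀ p, Measurable (g p) := by
    intro p
    apply Measurable.mul (measurable_const.mul measurable_snd)
    apply Finset.measurable_prod
    intro j _
    exact Real.measurable_exp.comp (measurable_const.mul
      ((measurable_const.sub ((measurable_pi_apply j).comp measurable_fst)).pow measurable_const))
  -- step 1 : rewrite the insert-product integrand
  have step1 : Ai = ∫ ω, ∫ ω', Real.exp (-γ * (x i ω - x i ω') ^ 2) * g (Z ω) (Z ω') ∂μ ∂μ := by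
    rw [hAi_def]
    congr 1
    funext ω
    apply MeasureTheory.integral_congr_ae
    filter_upwards with ω'
    rw [hgZ ω ω', Finset.prod_insert hi]
    ring
  -- step 2 : inner factorization by independence
  have inner : ∀ ω, (∫ ω', Real.exp (-γ * (x i ω - x i ω') ^ 2) * g (Z ω) (Z ω') ∂μ)
      = (∫ ω', Real.exp (-γ * (x i ω - x i ω') ^ 2) ∂μ) * (∫ ω', g (Z ω) (Z ω') ∂μ) := by
    intro ω
    have hφm : Measurable (fun b : ℝ => Real.exp (-γ * (x i ω - b) ^ 2)) :=
      Real.measurable_exp.comp (measurable_const.mul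
        ((measurable_const.sub measurable_id).pow measurable_const))
    have hind : IndepFun (fun ω' => Real.exp (-γ * (x i ω - x i ω') ^ 2))
        (fun ω' => g (Z ω) (Z ω')) μ := hindep.comp hφm (hg_meas (Z ω))
    exact hind.integral_fun_mul_eq_mul_integral
      ((hφm.comp (hx i)).aestronglyMeasurable)
      (((hg_meas (Z ω)).comp hZm).aestronglyMeasurable)
  -- step 3 : outer factorization by independence
  have hF2m : Measurable (fun a : ℝ => ∫ ω', Real.exp (-γ * (a - x i ω') ^ 2) ∂μ) := by
    have hm : StronglyMeasurable (fun q : ℝ × Ω => Real.exp (-γ * (q.1 - x i q.2) ^ 2)) :=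
      (Real.measurable_exp.comp (measurable_const.mul
        ((measurable_fst.sub ((hx i).comp measurable_snd)).pow measurable_const))).stronglyMeasurable
    exact hm.integral_prod_right'.measurable
  have hG2m : Measurable (fun p : ({j // j ∈ S} → ℝ) × ℝ => ∫ ω', g p (Z ω') ∂μ) := by
    have hm : StronglyMeasurable (fun q : ((({j // j ∈ S} → ℝ) × ℝ)) × Ω => g q.1 (Z q.2)) := by
      apply Measurable.stronglyMeasurable
      apply Measurable.mul
      · exact (measurable_snd.comp measurable_fst).mul (hy.comp measurable_snd)
      · apply Finset.measurable_prod
        intro j _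
        exact Real.measurable_exp.comp (measurable_const.mul
          ((((measurable_pi_apply j).comp (measurable_fst.comp measurable_fst)).sub
            ((hx j).comp measurable_snd)).pow measurable_const))
    exact hm.integral_prod_right'.measurable
  have outer : (∫ ω, (∫ ω', Real.exp (-γ * (x i ω - x i ω') ^ 2) ∂μ) * (∫ ω', g (Z ω) (Z ω') ∂μ) ∂μ)
      = (∫ ω, ∫ ω', Real.exp (-γ * (x i ω - x i ω') ^ 2) ∂μ ∂μ) *
        (∫ ω, ∫ ω', g (Z ω) (Z ω') ∂μ ∂μ) := by
    have hind : IndepFun (fun ω => ∫ ω', Real.exp (-γ * (x i ω - x i ω') ^ 2) ∂μ)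
        (fun ω => ∫ ω', g (Z ω) (Z ω') ∂μ) μ := hindep.comp hF2m hG2m
    exact hind.integral_fun_mul_eq_mul_integral
      ((hF2m.comp (hx i)).aestronglyMeasurable)
      ((hG2m.comp hZm).aestronglyMeasurable)
  have hgZ_int : (∫ ω, ∫ ω', g (Z ω) (Z ω') ∂μ ∂μ) = AS := by
    rw [hAS_def]
    congr 1
    funext ω
    exact MeasureTheory.integral_congr_ae (Filter.Eventually.of_forall fun ω' => hgZ ω ω')
  have hfact : Ai = al * AS := by
    rw [step1]
    calc (∫ ω, ∫ ω', Real.exp (-γ * (x i ω - x i ω') ^ 2) * g (Z ω) (Z ω') ∂μ ∂μ)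
        = ∫ ω, (∫ ω', Real.exp (-γ * (x i ω - x i ω') ^ 2) ∂μ) * (∫ ω', g (Z ω) (Z ω') ∂μ) ∂μ :=
          MeasureTheory.integral_congr_ae (Filter.Eventually.of_forall inner)
      _ = al * AS := by rw [outer, hgZ_int, hal_def]
  refine ⟨?_, hal_pos, hal_le, ?_⟩
  · show Ai - AS = (al - 1) * AS
    rw [hfact]; ring
  · show Ai - AS ≤ 0
    rw [hfact]; nlinarith
end
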